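/- Explicitly, in the Einstein static universe E, (t₁,θ₁) ≤ (t₂,θ₂) iff t₂ - t₁ ≥ d(θ₁,θ₂) or t₂ - t₁ ≥ π, where d is the standard arc-length metric on the circle ℝ/2πℤ. -/

import Mathlib

open Real

def mLe (p q : ℝ × ℝ) : Prop := |q.2 - p.2| ≤ q.1 - p.1

/-- The two-dimensional Einstein static universe `E = ℝ × (ℝ/2πℤ)`. -/
abbrev E : Type := ℝ × AddCircle (2 * Real.pi)

/-- The covering map `π(t,x) = (t, x mod 2π)`. -/
noncomputable def proj (p : ℝ × ℝ) : E := (p.1, (p.2 : AddCircle (2 * Real.pi)))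

/-- The causal order on `E`, defined via lifts to Minkowski space. -/
def eLe (a b : E) : Prop := ∃ p q : ℝ × ℝ, proj p = a ∧ proj q = b ∧ mLe p q

theorem eLe_iff_dist (t₁ t₂ : ℝ) (θ₁ θ₂ : AddCircle (2 * Real.pi)) :
    eLe (t₁, θ₁) (t₂, θ₂) ↔ (dist θ₁ θ₂ ≤ t₂ - t₁ ∨ Real.pi ≤ t₂ - t₁) := by
  constructor
  · rintro ⟨p, q, hp, hq, hle⟩
    left
    simp only [proj, Prod.mk.injEq] at hp hq
    obtain ⟨hp1, hp2⟩ := hp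
    obtain ⟨hq1, hq2⟩ := hq
    have : dist θ₁ θ₂ = ‖((q.2 - p.2 : ℝ) : AddCircle (2 * Real.pi))‖ := by
      rw [← hp2, ← hq2, dist_eq_norm', AddCircle.coe_sub]
    calc dist θ₁ θ₂ ≤ ‖(q.2 - p.2 : ℝ)‖ := this ▸ QuotientAddGroup.norm_mk_le_norm
      _ ≤ q.1 - p.1 := hle
      _ = t₂ - t₁ := by rw [hp1, hq1]
  · intro h
    have hd : dist θ₁ θ₂ ≤ t₂ - t₁ := by
      rcases h with h | h
      · exact h
      · refine le_trans ?_ h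
        rw [dist_eq_norm]
        have := AddCircle.norm_le_half_period (p := 2 * Real.pi) (x := θ₁ - θ₂)
          (by positivity)
        rwa [abs_of_pos (by positivity), mul_div_cancel_left₀ _ two_ne_zero] at this
    obtain ⟨x, hx⟩ := QuotientAddGroup.mk_surjective θ₁
    obtain ⟨y₀, hy₀⟩ := QuotientAddGroup.mk_surjective θ₂
    set y : ℝ := y₀ - round ((2 * Real.pi)⁻¹ * (y₀ - x)) * (2 * Real.pi) with hy
    have hycoe : ((y : ℝ) : AddCircle (2 * Real.pi)) = θ₂ := by
      rw [hy, ← hy₀]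
      have : ((round ((2 * Real.pi)⁻¹ * (y₀ - x)) * (2 * Real.pi) : ℝ) :
          AddCircle (2 * Real.pi)) = 0 := by
        rw [QuotientAddGroup.eq_zero_iff, ← zsmul_eq_mul]
        exact AddSubgroup.zsmul_mem_zmultiples _ _
      rw [AddCircle.coe_sub, this, sub_zero]
    have hdist : dist θ₁ θ₂ = |y - x| := by
      rw [← hx, ← hy₀, dist_eq_norm', ← AddCircle.coe_sub, AddCircle.norm_eq, hy]
      ring_nf
    exact ⟨(t₁, x), (t₂, y), by simp [proj, hx], by simp [proj, hycoe],
      by simpa [mLe, ← hdist] using hd⟩
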